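/- Fix a real number z. Suppose S : ℕ × ℕ → ℝ satisfies S(0,0) = 1, S(0,y) = 0 for all y ≥ 1, S(x+1,0) = (x+z)·S(x,0) for all x ≥ 0, and S(x+1,y) = (x+z)·S(x,y) + (x+y)·S(x,y−1) for all x ≥ 0 and y ≥ 1. Then for every x ≥ 0, the sum over y from 0 to x of S(x,y) equals (x+z)^x. -/

import Mathlib

open Finset

/-- Forward difference operator. -/
private def dd (f : ℝ → ℝ) : ℝ → ℝ := fun t => f (t + 1) - f t

private lemma ddIter_succ' (k : ℕ) (f : ℝ → ℝ) (t : ℝ) :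
    dd^[k + 1] f t = dd^[k] f (t + 1) - dd^[k] f t := by
  rw [Function.iterate_succ_apply']
  rfl

private lemma ddIter_add (k : ℕ) (f g : ℝ → ℝ) (t : ℝ) :
    dd^[k] (fun s => f s + g s) t = dd^[k] f t + dd^[k] g t := by
  induction k generalizing f g t with
  | zero => simp
  | succ k ih =>
    rw [Function.iterate_succ_apply, Function.iterate_succ_apply,
      Function.iterate_succ_apply]
    have h : dd (fun s => f s + g s) = fun s => dd f s + dd g s := by
      funext s; simp only [dd]; ring
    rw [h, ih]

private lemma ddIter_sum {ι : Type*} (F : Finset ι) (g : ι → ℝ → ℝ) :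
    ∀ (k : ℕ) (t : ℝ), dd^[k] (fun s => ∑ i ∈ F, g i s) t = ∑ i ∈ F, dd^[k] (g i) t := by
  intro k
  induction k generalizing g with
  | zero => intro t; simp
  | succ k ih =>
    intro t
    rw [Function.iterate_succ_apply]
    have h : dd (fun s => ∑ i ∈ F, g i s) = fun s => ∑ i ∈ F, dd (g i) s := by
      funext s; simp [dd, Finset.sum_sub_distrib]
    rw [h, ih (fun i => dd (g i)) t]
    exact Finset.sum_congr rfl fun i _ => by rw [← Function.iterate_succ_apply]

private lemma ddIter_const_mul (k : ℕ) (c : ℝ) (f : ℝ → ℝ) (t : ℝ) :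
    dd^[k] (fun s => c * f s) t = c * dd^[k] f t := by
  induction k generalizing f t with
  | zero => simp
  | succ k ih =>
    rw [Function.iterate_succ_apply, Function.iterate_succ_apply]
    have h : dd (fun s => c * f s) = fun s => c * dd f s := by
      funext s; simp only [dd]; ring
    rw [h, ih]

private lemma ddIter_shift (k : ℕ) (g : ℝ → ℝ) (t : ℝ) :
    dd^[k] (fun s => g (s + 1)) t = dd^[k] g (t + 1) := by
  induction k generalizing t with
  | zero => simp
  | succ k ih => rw [ddIter_succ', ddIter_succ', ih, ih]

private lemma dd_pow (n : ℕ) (s : ℝ) :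
    dd (fun r => r ^ n) s = ∑ j ∈ range n, (n.choose j : ℝ) * s ^ j := by
  have h := add_pow s 1 n
  simp only [one_pow, mul_one] at h
  show (s + 1) ^ n - s ^ n = _
  rw [h, Finset.sum_range_succ]
  simp only [Nat.choose_self, Nat.cast_one, mul_one]
  rw [add_sub_cancel_right]
  exact Finset.sum_congr rfl fun j _ => mul_comm _ _

private lemma ddIter_pow_zero : ∀ n k : ℕ, n < k → ∀ t : ℝ, dd^[k] (fun s => s ^ n) t = 0 := by
  intro n
  induction n using Nat.strong_induction_on with
  | _ n ih =>
    intro k hk t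
    obtain ⟨k', rfl⟩ : ∃ k', k = k' + 1 := ⟨k - 1, by omega⟩
    rw [Function.iterate_succ_apply]
    have h : dd (fun s => s ^ n) = fun s => ∑ j ∈ range n, (n.choose j : ℝ) * s ^ j := by
      funext s; exact dd_pow n s
    rw [h, ddIter_sum]
    refine Finset.sum_eq_zero fun j hj => ?_
    have hjn := mem_range.mp hj
    rw [ddIter_const_mul, ih j hjn k' (by omega) t, mul_zero]

private lemma ddIter_pow_diag : ∀ (m : ℕ) (t : ℝ), dd^[m] (fun s => s ^ m) t = m.factorial := by
  intro m
  induction m with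
  | zero => intro t; simp
  | succ m ih =>
    intro t
    rw [Function.iterate_succ_apply]
    have h : dd (fun s => s ^ (m + 1))
        = fun s => ∑ j ∈ range (m + 1), ((m + 1).choose j : ℝ) * s ^ j := by
      funext s; exact dd_pow (m + 1) s
    rw [h, ddIter_sum, Finset.sum_range_succ]
    have h2 : ∀ j ∈ range m, dd^[m] (fun s => ((m + 1).choose j : ℝ) * s ^ j) t = 0 := by
      intro j hj
      rw [ddIter_const_mul, ddIter_pow_zero j m (mem_range.mp hj) t, mul_zero]
    rw [Finset.sum_eq_zero h2, ddIter_const_mul, ih t, zero_add, Nat.choose_succ_self_right,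
      Nat.factorial_succ]
    push_cast
    ring

private lemma ddIter_id_mul : ∀ (m : ℕ) (g : ℝ → ℝ) (t : ℝ),
    dd^[m + 1] (fun s => s * g s) t
      = t * dd^[m + 1] g t + ((m : ℝ) + 1) * dd^[m] g (t + 1) := by
  intro m
  induction m with
  | zero =>
    intro g t
    show (t + 1) * g (t + 1) - t * g t = t * (g (t + 1) - g t) + _ * g (t + 1)
    push_cast
    ring
  | succ m ih =>
    intro g t
    rw [Function.iterate_succ_apply]
    have h : dd (fun s => s * g s) = fun s => s * dd g s + g (s + 1) := by
      funext s; simp only [dd]; ring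
    rw [h, ddIter_add, ih (dd g) t, ddIter_shift,
      ← Function.iterate_succ_apply dd (m + 1) g, ← Function.iterate_succ_apply dd m g]
    push_cast
    ring

private lemma prod_shift_base (m : ℕ) (a : ℝ) :
    ∏ i ∈ range (m + 1), (a + (i : ℝ)) = a * ∏ i ∈ range m, (a + 1 + (i : ℝ)) := by
  rw [Finset.prod_range_succ']
  have h : ∀ i ∈ range m, (a + ((i + 1 : ℕ) : ℝ)) = a + 1 + (i : ℝ) := by
    intro i _; push_cast; ring
  rw [Finset.prod_congr rfl h]
  push_cast
  ring

private lemma riseA : ∀ (m : ℕ) (a : ℝ),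
    ∏ i ∈ range m, (a + 1 + (i : ℝ))
      = ∑ k ∈ range (m + 1),
          ((m.factorial : ℝ) / (k.factorial : ℝ)) * ∏ i ∈ range k, (a + (i : ℝ)) := by
  intro m
  induction m with
  | zero => intro a; simp
  | succ m ih =>
    intro a
    have key : ∏ i ∈ range (m + 1), (a + 1 + (i : ℝ))
        = (∏ i ∈ range (m + 1), (a + (i : ℝ)))
          + ((m : ℝ) + 1) * ∏ i ∈ range m, (a + 1 + (i : ℝ)) := by
      rw [Finset.prod_range_succ, prod_shift_base]
      push_cast
      ring
    rw [key, ih a, Finset.mul_sum]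
    conv_rhs => rw [Finset.sum_range_succ]
    have h1 : (((m + 1).factorial : ℝ) / ((m + 1).factorial : ℝ)) = 1 :=
      div_self (by exact_mod_cast Nat.factorial_ne_zero (m + 1))
    have h2 : ∀ k ∈ range (m + 1),
        ((m : ℝ) + 1) * (((m.factorial : ℝ) / (k.factorial : ℝ)) * ∏ i ∈ range k, (a + (i : ℝ)))
          = (((m + 1).factorial : ℝ) / (k.factorial : ℝ)) * ∏ i ∈ range k, (a + (i : ℝ)) := by
      intro k _
      rw [Nat.factorial_succ]
      push_cast
      ring
    rw [Finset.sum_congr rfl h2, h1, one_mul]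
    ring

private lemma riseB (m : ℕ) (a : ℝ) :
    a * ∏ i ∈ range m, (a + 2 + (i : ℝ))
      = ∑ k ∈ range (m + 1),
          ((m.factorial : ℝ) / (k.factorial : ℝ)) * ∏ i ∈ range (k + 1), (a + (i : ℝ)) := by
  have h0 : ∏ i ∈ range m, (a + 2 + (i : ℝ)) = ∏ i ∈ range m, ((a + 1) + 1 + (i : ℝ)) :=
    Finset.prod_congr rfl fun i _ => by ring
  rw [h0, riseA m (a + 1), Finset.mul_sum]
  refine Finset.sum_congr rfl fun k _ => ?_
  rw [prod_shift_base k a]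
  have h1 : ∏ i ∈ range k, ((a + 1) + (i : ℝ)) = ∏ i ∈ range k, (a + 1 + (i : ℝ)) :=
    Finset.prod_congr rfl fun i _ => by ring
  rw [h1]
  ring

private lemma Vrec (x m : ℕ) (u : ℝ) :
    dd^[m] (fun t => t ^ (x + m + 1)) (u + 1)
      = u * ∑ k ∈ range (m + 1),
            ((m.factorial : ℝ) / (k.factorial : ℝ)) * dd^[k] (fun t => t ^ (x + k)) u
        + ∑ k ∈ range (m + 1),
            ((m.factorial : ℝ) / (k.factorial : ℝ)) * dd^[k + 1] (fun t => t ^ (x + k + 1)) u := by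
  -- abbreviation: C k = dd^[k] (·^(x+k+1)) (u+1)
  set C : ℕ → ℝ := fun k => dd^[k] (fun t => t ^ (x + k + 1)) (u + 1) with hC
  -- per-k identity
  have per : ∀ k : ℕ,
      u * dd^[k] (fun t => t ^ (x + k)) u + dd^[k + 1] (fun t => t ^ (x + k + 1)) u
        = C k - (k : ℝ) * C (k - 1) := by
    intro k
    cases k with
    | zero =>
      simp only [Nat.cast_zero, zero_mul, sub_zero, hC]
      rw [ddIter_succ']
      show u * u ^ (x + 0) + (dd^[0] (fun t => t ^ (x + 0 + 1)) (u + 1)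
        - dd^[0] (fun t => t ^ (x + 0 + 1)) u) = _
      simp only [Function.iterate_zero, id_eq]
      ring
    | succ j =>
      have hmul : (fun s : ℝ => s * s ^ (x + j + 1))
          = fun s : ℝ => s ^ (x + j + 1 + 1) := by
        funext s; rw [← pow_succ']
      have hleib := ddIter_id_mul j (fun t => t ^ (x + j + 1)) u
      rw [hmul] at hleib
      have hsucc := ddIter_succ' (j + 1) (fun t => t ^ (x + j + 1 + 1)) u
      have hc1 : C (j + 1) = dd^[j + 1] (fun t => t ^ (x + j + 1 + 1)) (u + 1) := rfl
      have hc0 : C ((j + 1) - 1) = dd^[j] (fun t => t ^ (x + j + 1)) (u + 1) := rfl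
      show u * dd^[j + 1] (fun t => t ^ (x + j + 1)) u
            + dd^[j + 1 + 1] (fun t => t ^ (x + j + 1 + 1)) u
          = C (j + 1) - (((j + 1 : ℕ)) : ℝ) * C ((j + 1) - 1)
      rw [hc1, hc0, hsucc]
      push_cast
      linarith [hleib]
  -- sum it up
  have hsum : u * ∑ k ∈ range (m + 1),
        ((m.factorial : ℝ) / (k.factorial : ℝ)) * dd^[k] (fun t => t ^ (x + k)) u
      + ∑ k ∈ range (m + 1),
        ((m.factorial : ℝ) / (k.factorial : ℝ)) * dd^[k + 1] (fun t => t ^ (x + k + 1)) u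
      = ∑ k ∈ range (m + 1),
        ((m.factorial : ℝ) / (k.factorial : ℝ)) * (C k - (k : ℝ) * C (k - 1)) := by
    rw [Finset.mul_sum, ← Finset.sum_add_distrib]
    refine Finset.sum_congr rfl fun k _ => ?_
    rw [← per k]
    ring
  rw [hsum]
  have hsplit : ∑ k ∈ range (m + 1),
        ((m.factorial : ℝ) / (k.factorial : ℝ)) * (C k - (k : ℝ) * C (k - 1))
      = ∑ k ∈ range (m + 1), ((m.factorial : ℝ) / (k.factorial : ℝ)) * C k
        - ∑ k ∈ range (m + 1), ((m.factorial : ℝ) / (k.factorial : ℝ)) * ((k : ℝ) * C (k - 1)) := by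
    rw [← Finset.sum_sub_distrib]
    exact Finset.sum_congr rfl fun k _ => by ring
  rw [hsplit]
  have hshift : ∑ k ∈ range (m + 1),
        ((m.factorial : ℝ) / (k.factorial : ℝ)) * ((k : ℝ) * C (k - 1))
      = ∑ k ∈ range m, ((m.factorial : ℝ) / (k.factorial : ℝ)) * C k := by
    rw [Finset.sum_range_succ']
    simp only [Nat.cast_zero, zero_mul, mul_zero, add_zero]
    refine Finset.sum_congr rfl fun k _ => ?_
    have h1 : (k + 1 : ℕ) - 1 = k := rfl
    rw [h1, Nat.factorial_succ]
    have hne : ((k.factorial : ℝ)) ≠ 0 := by exact_mod_cast Nat.factorial_ne_zero k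
    have hne2 : (((k + 1) * k.factorial : ℕ) : ℝ) ≠ 0 := by
      exact_mod_cast Nat.mul_ne_zero (Nat.succ_ne_zero k) (Nat.factorial_ne_zero k)
    field_simp
    push_cast
    ring
  rw [hshift, Finset.sum_range_succ]
  have h1 : ((m.factorial : ℝ) / (m.factorial : ℝ)) = 1 :=
    div_self (by exact_mod_cast Nat.factorial_ne_zero m)
  rw [h1]
  ring

private lemma meir_key (z : ℝ) (S : ℕ → ℕ → ℝ)
    (h00 : S 0 0 = 1)
    (h0 : ∀ y : ℕ, 1 ≤ y → S 0 y = 0)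
    (hx0 : ∀ x : ℕ, S (x + 1) 0 = ((x : ℝ) + z) * S x 0)
    (hxy : ∀ x : ℕ, ∀ y : ℕ, 1 ≤ y →
      S (x + 1) y = ((x : ℝ) + z) * S x y + ((x : ℝ) + (y : ℝ)) * S x (y - 1)) :
    ∀ x m : ℕ,
      ∑ y ∈ range (x + 1), S x y * ∏ i ∈ range m, ((x : ℝ) + (y : ℝ) + 1 + (i : ℝ))
        = dd^[m] (fun t => t ^ (x + m)) ((x : ℝ) + z) := by
  have Svan : ∀ x y : ℕ, x < y → S x y = 0 := by
    intro x
    induction x with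
    | zero => intro y hy; exact h0 y hy
    | succ x ih =>
      intro y hy
      have hy1 : 1 ≤ y := by omega
      rw [hxy x y hy1, ih y (by omega), ih (y - 1) (by omega)]
      ring
  intro x
  induction x with
  | zero =>
    intro m
    rw [Finset.range_one, Finset.sum_singleton, h00, one_mul]
    have hL : ∏ i ∈ range m, ((0 : ℕ) + ((0 : ℕ) : ℝ) + 1 + (i : ℝ))
        = (m.factorial : ℝ) := by
      have h : ∀ i ∈ range m, ((0 : ℕ) + ((0 : ℕ) : ℝ) + 1 + (i : ℝ)) = ((i + 1 : ℕ) : ℝ) := by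
        intro i _; push_cast; ring
      rw [Finset.prod_congr rfl h, ← Nat.cast_prod, Finset.prod_range_add_one_eq_factorial]
    have hR : dd^[m] (fun t => t ^ (0 + m)) (((0 : ℕ) : ℝ) + z) = (m.factorial : ℝ) := by
      rw [Nat.zero_add]
      exact ddIter_pow_diag m _
    rw [hR]
    exact_mod_cast hL
  | succ x ihx =>
    intro m
    set X : ℝ := (x : ℝ) with hX
    set c : ℕ → ℝ := fun k => (m.factorial : ℝ) / (k.factorial : ℝ) with hc
    -- LHS rewrite to two grouped sums
    have step1 : ∑ y ∈ range (x + 2),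
          S (x + 1) y * ∏ i ∈ range m, (((x + 1 : ℕ) : ℝ) + (y : ℝ) + 1 + (i : ℝ))
        = (X + z) * ∑ y ∈ range (x + 2),
            S x y * ∏ i ∈ range m, (X + (y : ℝ) + 2 + (i : ℝ))
          + ∑ y ∈ range (x + 1),
              S x y * ((X + (y : ℝ) + 1) * ∏ i ∈ range m, (X + (y : ℝ) + 3 + (i : ℝ))) := by
      rw [Finset.sum_range_succ' (fun y => S (x + 1) y *
          ∏ i ∈ range m, (((x + 1 : ℕ) : ℝ) + (y : ℝ) + 1 + (i : ℝ))) (x + 1)]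
      have hA : ∀ y ∈ range (x + 1),
          S (x + 1) (y + 1) * ∏ i ∈ range m, (((x + 1 : ℕ) : ℝ) + ((y + 1 : ℕ) : ℝ) + 1 + (i : ℝ))
            = (X + z) * (S x (y + 1) * ∏ i ∈ range m, (X + ((y + 1 : ℕ) : ℝ) + 2 + (i : ℝ)))
              + S x y * ((X + (y : ℝ) + 1) * ∏ i ∈ range m, (X + (y : ℝ) + 3 + (i : ℝ))) := by
        intro y _
        have hrec := hxy x (y + 1) (by omega)
        have hsub : (y + 1 : ℕ) - 1 = y := rfl
        rw [hsub] at hrec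
        have hprod1 : ∏ i ∈ range m, (((x + 1 : ℕ) : ℝ) + ((y + 1 : ℕ) : ℝ) + 1 + (i : ℝ))
            = ∏ i ∈ range m, (X + ((y + 1 : ℕ) : ℝ) + 2 + (i : ℝ)) :=
          Finset.prod_congr rfl fun i _ => by push_cast; ring
        have hprod2 : ∏ i ∈ range m, (X + ((y + 1 : ℕ) : ℝ) + 2 + (i : ℝ))
            = ∏ i ∈ range m, (X + (y : ℝ) + 3 + (i : ℝ)) :=
          Finset.prod_congr rfl fun i _ => by push_cast; ring
        rw [hprod1, hrec]
        rw [hprod2]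
        push_cast
        ring
      rw [Finset.sum_congr rfl hA, Finset.sum_add_distrib]
      have h0' : S (x + 1) 0 * ∏ i ∈ range m, (((x + 1 : ℕ) : ℝ) + ((0 : ℕ) : ℝ) + 1 + (i : ℝ))
          = (X + z) * (S x 0 * ∏ i ∈ range m, (X + ((0 : ℕ) : ℝ) + 2 + (i : ℝ))) := by
        rw [hx0 x]
        have : ∏ i ∈ range m, (((x + 1 : ℕ) : ℝ) + ((0 : ℕ) : ℝ) + 1 + (i : ℝ))
            = ∏ i ∈ range m, (X + ((0 : ℕ) : ℝ) + 2 + (i : ℝ)) :=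
          Finset.prod_congr rfl fun i _ => by push_cast; ring
        rw [this]
        ring
      rw [h0']
      have hmerge : ∑ y ∈ range (x + 1),
            (X + z) * (S x (y + 1) * ∏ i ∈ range m, (X + ((y + 1 : ℕ) : ℝ) + 2 + (i : ℝ)))
          + (X + z) * (S x 0 * ∏ i ∈ range m, (X + ((0 : ℕ) : ℝ) + 2 + (i : ℝ)))
          = (X + z) * ∑ y ∈ range (x + 2),
              S x y * ∏ i ∈ range m, (X + (y : ℝ) + 2 + (i : ℝ)) := by
        rw [Finset.sum_range_succ' (fun y => S x y *
            ∏ i ∈ range m, (X + (y : ℝ) + 2 + (i : ℝ))) (x + 1), mul_add, Finset.mul_sum]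
      rw [add_right_comm, hmerge]
    rw [step1]
    -- drop the vanishing top term in the first sum
    have hdrop : ∑ y ∈ range (x + 2), S x y * ∏ i ∈ range m, (X + (y : ℝ) + 2 + (i : ℝ))
        = ∑ y ∈ range (x + 1), S x y * ∏ i ∈ range m, (X + (y : ℝ) + 2 + (i : ℝ)) := by
      rw [Finset.sum_range_succ, Svan x (x + 1) (by omega), zero_mul, add_zero]
    rw [hdrop]
    -- apply riseA / riseB pointwise and swap sums
    have hA2 : ∑ y ∈ range (x + 1), S x y * ∏ i ∈ range m, (X + (y : ℝ) + 2 + (i : ℝ))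
        = ∑ k ∈ range (m + 1), c k *
            ∑ y ∈ range (x + 1), S x y * ∏ i ∈ range k, (X + (y : ℝ) + 1 + (i : ℝ)) := by
      have h : ∀ y ∈ range (x + 1),
          S x y * ∏ i ∈ range m, (X + (y : ℝ) + 2 + (i : ℝ))
            = ∑ k ∈ range (m + 1),
                c k * (S x y * ∏ i ∈ range k, (X + (y : ℝ) + 1 + (i : ℝ))) := by
        intro y _
        have hr := riseA m (X + (y : ℝ) + 1)
        have hl : ∏ i ∈ range m, (X + (y : ℝ) + 2 + (i : ℝ))
            = ∏ i ∈ range m, (X + (y : ℝ) + 1 + 1 + (i : ℝ)) :=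
          Finset.prod_congr rfl fun i _ => by ring
        have hrr : ∀ k ∈ range (m + 1), ((m.factorial : ℝ) / (k.factorial : ℝ)) *
              ∏ i ∈ range k, (X + (y : ℝ) + 1 + (i : ℝ))
            = ((m.factorial : ℝ) / (k.factorial : ℝ)) *
              ∏ i ∈ range k, (X + (y : ℝ) + 1 + (i : ℝ)) := fun k _ => rfl
        rw [hl, hr, Finset.mul_sum]
        exact Finset.sum_congr rfl fun k _ => by rw [hc]; ring
      rw [Finset.sum_congr rfl h, Finset.sum_comm]
      exact Finset.sum_congr rfl fun k _ => by rw [Finset.mul_sum]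
    have hB2 : ∑ y ∈ range (x + 1),
          S x y * ((X + (y : ℝ) + 1) * ∏ i ∈ range m, (X + (y : ℝ) + 3 + (i : ℝ)))
        = ∑ k ∈ range (m + 1), c k *
            ∑ y ∈ range (x + 1), S x y * ∏ i ∈ range (k + 1), (X + (y : ℝ) + 1 + (i : ℝ)) := by
      have h : ∀ y ∈ range (x + 1),
          S x y * ((X + (y : ℝ) + 1) * ∏ i ∈ range m, (X + (y : ℝ) + 3 + (i : ℝ)))
            = ∑ k ∈ range (m + 1),
                c k * (S x y * ∏ i ∈ range (k + 1), (X + (y : ℝ) + 1 + (i : ℝ))) := by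
        intro y _
        have hr := riseB m (X + (y : ℝ) + 1)
        have hl : ∏ i ∈ range m, (X + (y : ℝ) + 3 + (i : ℝ))
            = ∏ i ∈ range m, (X + (y : ℝ) + 1 + 2 + (i : ℝ)) :=
          Finset.prod_congr rfl fun i _ => by ring
        rw [hl, hr, Finset.mul_sum]
        exact Finset.sum_congr rfl fun k _ => by rw [hc]; ring
      rw [Finset.sum_congr rfl h, Finset.sum_comm]
      exact Finset.sum_congr rfl fun k _ => by rw [Finset.mul_sum]
    rw [hA2, hB2]
    -- apply induction hypothesis
    have hIH1 : ∀ k ∈ range (m + 1),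
        c k * ∑ y ∈ range (x + 1), S x y * ∏ i ∈ range k, (X + (y : ℝ) + 1 + (i : ℝ))
          = c k * dd^[k] (fun t => t ^ (x + k)) (X + z) := by
      intro k _
      rw [ihx k]
    have hIH2 : ∀ k ∈ range (m + 1),
        c k * ∑ y ∈ range (x + 1), S x y * ∏ i ∈ range (k + 1), (X + (y : ℝ) + 1 + (i : ℝ))
          = c k * dd^[k + 1] (fun t => t ^ (x + (k + 1))) (X + z) := by
      intro k _
      rw [ihx (k + 1)]
    rw [Finset.sum_congr rfl hIH1, Finset.sum_congr rfl hIH2]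
    -- conclude with Vrec
    have hpt : ((x + 1 : ℕ) : ℝ) + z = (X + z) + 1 := by push_cast; ring
    have hexp : (x + 1) + m = x + m + 1 := by omega
    rw [hpt, hexp, Vrec x m (X + z)]
    rfl

/-- Meir's generalization of Ramanujan's formula: if `S` satisfies the recursion
`S(x+1,y) = (x+z)·S(x,y) + (x+y)·S(x,y-1)` with initial condition concentrated at `(0,0)`,
then the row sums are `(x+z)^x`. -/
theorem meir_row_sums (z : ℝ) (S : ℕ → ℕ → ℝ)
    (h00 : S 0 0 = 1)
    (h0 : ∀ y : ℕ, 1 ≤ y → S 0 y = 0)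
    (hx0 : ∀ x : ℕ, S (x + 1) 0 = ((x : ℝ) + z) * S x 0)
    (hxy : ∀ x : ℕ, ∀ y : ℕ, 1 ≤ y →
      S (x + 1) y = ((x : ℝ) + z) * S x y + ((x : ℝ) + (y : ℝ)) * S x (y - 1)) :
    ∀ x : ℕ, ∑ y ∈ Finset.range (x + 1), S x y = ((x : ℝ) + z) ^ x := by
  intro x
  have h := meir_key z S h00 h0 hx0 hxy x 0
  simpa using h
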